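/- Let P be a full-information protocol in the crash-failure model and r a run. For every node ⟨i,m⟩: K_i(not-known(∃0)) holds at (r,m) if and only if both (1) K_i∃0 does not hold at (r,m), and (2) some time k ≤ m is revealed to ⟨i,m⟩ in r (i.e., for every process j', the node ⟨j',k⟩ is revealed to ⟨i,m⟩). -/
import Mathlib


attribute [local instance] Classical.propDecidable

/-- An adversary in the synchronous crash-failure model: an input vector of binary
initial values, a failure pattern given by the delivery relation `F` (`F m j i` means
the message sent by `j` at time `m` is delivered to `i` at time `m+1`, i.e. in round `m+1`),
and a crash round for each process (`⊤` meaning the process never crashes).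
A process behaves correctly before its crashing round and sends nothing afterwards;
during its crashing round it may send to an arbitrary subset. -/
structure Adversary (n : ℕ) where
  init : Fin n → Bool
  F : ℕ → Fin n → Fin n → Prop
  crash : Fin n → ℕ∞
  crash_pos : ∀ j, 1 ≤ crash j
  before_crash : ∀ (m : ℕ) (j i : Fin n), ((m + 1 : ℕ) : ℕ∞) < crash j → F m j i
  after_crash : ∀ (m : ℕ) (j i : Fin n), crash j < ((m + 1 : ℕ) : ℕ∞) → ¬ F m j i

namespace Adversary

variable {n : ℕ}

/-- A process is faulty if it crashes at some point. -/
def Faulty (A : Adversary n) (j : Fin n) : Prop := A.crash j ≠ ⊤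

/-- The number `f` of actual failures in the run determined by the adversary. -/
noncomputable def numFaults (A : Adversary n) : ℕ := {j | A.Faulty j}.ncard

/-- A process is active at time `m` if it has not crashed before time `m`. -/
def Active (A : Adversary n) (j : Fin n) (m : ℕ) : Prop := ((m : ℕ) : ℕ∞) < A.crash j

end Adversary

/-- `Seen A ⟨j,ℓ⟩ ⟨i,m⟩`: node `⟨j,ℓ⟩` is in the view (communication graph) of node
`⟨i,m⟩`, i.e. there is a message chain from `⟨j,ℓ⟩` to `⟨i,m⟩`. -/
inductive Seen {n : ℕ} (A : Adversary n) : Fin n × ℕ → Fin n × ℕ → Prop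
  | refl (p : Fin n × ℕ) : Seen A p p
  | self {p : Fin n × ℕ} {i : Fin n} {m : ℕ} : Seen A p (i, m) → Seen A p (i, m + 1)
  | step {p : Fin n × ℕ} {j i : Fin n} {m : ℕ} : Seen A p (j, m) → A.F m j i →
      Seen A p (i, m + 1)

open Adversary

/-- Two adversaries give process `i` the same view at time `m` in a full-information
protocol: the same nodes are seen, with the same initial values at seen time-0 nodes
and the same incoming edges at seen later nodes. -/
def sameView {n : ℕ} (A B : Adversary n) (i : Fin n) (m : ℕ) : Prop :=
  (∀ p, Seen A p (i, m) ↔ Seen B p (i, m)) ∧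
  (∀ j, Seen A (j, 0) (i, m) → A.init j = B.init j) ∧
  (∀ (k : ℕ) (j j' : Fin n), Seen A (j', k + 1) (i, m) → (A.F k j j' ↔ B.F k j j'))

/-- The local state of (active) process `i` at time `m` is the same under both
adversaries: `i` is active in both and has the same full-information view. -/
def sameLocal {n : ℕ} (A B : Adversary n) (i : Fin n) (m : ℕ) : Prop :=
  A.Active i m ∧ B.Active i m ∧ sameView A B i m

/-- The runs of the system are those generated by adversaries with at most `t` crashes. -/
def Valid {n : ℕ} (t : ℕ) (A : Adversary n) : Prop := A.numFaults ≤ t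

/-- Knowledge in the full-information protocol: `i` knows the fact `φ` at time `m`
iff `φ` holds at time `m` in every run (with at most `t` failures) in which `i` has
the same local state. -/
def Knows {n : ℕ} (t : ℕ) (φ : Adversary n → ℕ → Prop) (A : Adversary n) (i : Fin n)
    (m : ℕ) : Prop :=
  ∀ B : Adversary n, Valid t B → sameLocal A B i m → φ B m

/-- The fact `∃v`: some process has initial value `v`. -/
def existsVal {n : ℕ} (v : Bool) : Adversary n → ℕ → Prop := fun A _ => ∃ j, A.init j = v

/-- Node `⟨j',m'⟩` is revealed to `⟨i,m⟩`: either it is seen by `⟨i,m⟩`, or for some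
seen node `⟨i',m'⟩` the edge `(⟨j',m'-1⟩,⟨i',m'⟩)` is absent from `i`'s view
(proving that `j'` crashed before time `m'`). -/
def RevealedNode {n : ℕ} (A : Adversary n) (j' : Fin n) (m' : ℕ) (i : Fin n) (m : ℕ) :
    Prop :=
  Seen A (j', m') (i, m) ∨
  ∃ (i' : Fin n) (k : ℕ), m' = k + 1 ∧ Seen A (i', k + 1) (i, m) ∧ ¬ A.F k j' i'

/-- Time `k` is revealed to `⟨i,m⟩` if every node `⟨j',k⟩` is revealed to `⟨i,m⟩`. -/
def RevealedTime {n : ℕ} (A : Adversary n) (k : ℕ) (i : Fin n) (m : ℕ) : Prop :=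
  ∀ j', RevealedNode A j' k i m

/-- A hidden path w.r.t. `⟨i,m⟩`: for each `k ≤ m` a node `⟨j_k,k⟩` not revealed to `⟨i,m⟩`. -/
def HiddenPath {n : ℕ} (A : Adversary n) (i : Fin n) (m : ℕ) : Prop :=
  ∃ js : ℕ → Fin n, ∀ k ≤ m, ¬ RevealedNode A (js k) k i m

/-- `not-known(∃0)`: no process active at time `m` knows `∃0`. -/
def notKnown0 {n : ℕ} (t : ℕ) : Adversary n → ℕ → Prop :=
  fun A m => ∀ j, A.Active j m → ¬ Knows t (existsVal false) A j m

/-- A (full-information, deterministic) decision protocol, described by the decision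
status function: `P A i m = some v` iff by time `m` process `i` has decided `v`
in the run determined by adversary `A`. -/
abbrev ProtoDec (n : ℕ) : Type := Adversary n → Fin n → ℕ → Option Bool

/-- Sanity conditions making a decision-status function a protocol: decisions are
irrevocable, and (for active processes) depend only on the local state. -/
def IsProtocol {n : ℕ} (t : ℕ) (P : ProtoDec n) : Prop :=
  (∀ A i m v, P A i m = some v → P A i (m + 1) = some v) ∧
  (∀ A B i m, Valid t A → Valid t B → sameLocal A B i m → P A i m = P B i m)

/-- Process `i` performs the action `decide(v)` at time `m`: it is decided on `v`
at `m` and was undecided before. -/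
def DecidesAt {n : ℕ} (P : ProtoDec n) (A : Adversary n) (i : Fin n) (m : ℕ) (v : Bool) :
    Prop :=
  P A i m = some v ∧ ∀ k < m, P A i k = none

/-- Decision: every correct process eventually decides. -/
def Decision {n : ℕ} (t : ℕ) (P : ProtoDec n) : Prop :=
  ∀ A : Adversary n, Valid t A → ∀ i, ¬ A.Faulty i → ∃ m, P A i m ≠ none

/-- Validity: if all initial values are `v` then correct processes decide `v`. -/
def Validity {n : ℕ} (t : ℕ) (P : ProtoDec n) : Prop :=
  ∀ A : Adversary n, Valid t A → ∀ v : Bool, (∀ j, A.init j = v) →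
    ∀ i m w, ¬ A.Faulty i → P A i m = some w → w = v

/-- Agreement: all correct processes decide on the same value. -/
def Agreement {n : ℕ} (t : ℕ) (P : ProtoDec n) : Prop :=
  ∀ A : Adversary n, Valid t A → ∀ i j m m' v w, ¬ A.Faulty i → ¬ A.Faulty j →
    P A i m = some v → P A j m' = some w → v = w

def ConsensusSolves {n : ℕ} (t : ℕ) (P : ProtoDec n) : Prop :=
  Decision t P ∧ Validity t P ∧ Agreement t P

/-- Uniform Agreement: all processes that decide (faulty or not) decide the same value. -/
def UniformAgreement {n : ℕ} (t : ℕ) (P : ProtoDec n) : Prop :=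
  ∀ A : Adversary n, Valid t A → ∀ i j m m' v w,
    P A i m = some v → P A j m' = some w → v = w

def UniformConsensusSolves {n : ℕ} (t : ℕ) (P : ProtoDec n) : Prop :=
  Decision t P ∧ Validity t P ∧ UniformAgreement t P

/-- `Q` dominates `P`: for every adversary and process, if `i` has decided by time `m`
in `P` then `i` has decided by time `m` in `Q`. -/
def Dominates {n : ℕ} (t : ℕ) (Q P : ProtoDec n) : Prop :=
  ∀ A : Adversary n, Valid t A → ∀ i m, P A i m ≠ none → Q A i m ≠ none

def StrictlyDominates {n : ℕ} (t : ℕ) (Q P : ProtoDec n) : Prop :=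
  Dominates t Q P ∧ ¬ Dominates t P Q

/-- Turn a per-time decision rule into a decision-status function (the first decision
taken is kept forever). -/
def runDec (step : ℕ → Option Bool) : ℕ → Option Bool
  | 0 => step 0
  | m + 1 => (runDec step m).elim (step (m + 1)) some

/-- The protocol `P₀`: decide 0 as soon as `K_i ∃0` holds, otherwise decide 1 at time `t+1`. -/
noncomputable def P0 (n t : ℕ) : ProtoDec n := fun A i =>
  runDec fun m =>
    if Knows t (existsVal false) A i m then some false
    else if m = t + 1 then some true
    else none

/-- The unbeatable protocol `Opt₀`: decide 0 as soon as `K_i ∃0` holds, and decide 1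
as soon as `K_i not-known(∃0)` holds. -/
noncomputable def Opt0 (n t : ℕ) : ProtoDec n := fun A i =>
  runDec fun m =>
    if Knows t (existsVal false) A i m then some false
    else if Knows t (notKnown0 t) A i m then some true
    else none

/-- The number of processes with initial value `false` (0). -/
noncomputable def zeros {n : ℕ} (A : Adversary n) : ℕ :=
  (Finset.univ.filter fun j => A.init j = false).card

/-- The number of processes with initial value `true` (1). -/
noncomputable def ones {n : ℕ} (A : Adversary n) : ℕ :=
  (Finset.univ.filter fun j => A.init j = true).card

/-- The fact `Maj = 0`: at least `n/2` initial values are 0. -/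
def Maj0 (n : ℕ) : Adversary n → ℕ → Prop := fun A _ => n ≤ 2 * zeros A

/-- The fact `Maj = 1`: strictly more than `n/2` initial values are 1. -/
def Maj1 (n : ℕ) : Adversary n → ℕ → Prop := fun A _ => n < 2 * ones A

noncomputable def seenZeros {n : ℕ} (A : Adversary n) (i : Fin n) (m : ℕ) : ℕ :=
  (Finset.univ.filter fun j => Seen A (j, 0) (i, m) ∧ A.init j = false).card

noncomputable def seenOnes {n : ℕ} (A : Adversary n) (i : Fin n) (m : ℕ) : ℕ :=
  (Finset.univ.filter fun j => Seen A (j, 0) (i, m) ∧ A.init j = true).card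

/-- `Maj(vals(i,m))`: 0 if at least half of the initial values known to `i` at `m`
are 0, and 1 otherwise. -/
noncomputable def MajSeen {n : ℕ} (A : Adversary n) (i : Fin n) (m : ℕ) : Bool :=
  if seenOnes A i m ≤ seenZeros A i m then false else true

/-- The unbeatable majority consensus protocol `Opt_Maj`. -/
noncomputable def OptMaj (n t : ℕ) : ProtoDec n := fun A i =>
  runDec fun m =>
    if Knows t (Maj0 n) A i m then some false
    else if Knows t (Maj1 n) A i m then some true
    else if ∃ k ≤ m, RevealedTime A k i m then some (MajSeen A i m)
    else none

/-- The fact `∀1`: all initial values are 1. -/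
def all1 (n : ℕ) : Adversary n → ℕ → Prop := fun A _ => ∀ j, A.init j = true

/-- The sender set of `i` repeats at `⟨i,m⟩`: `i` hears from the same set of processes
in rounds `m-1` and `m` (only meaningful for `m ≥ 2`). -/
def senderSetRepeats {n : ℕ} (A : Adversary n) (i : Fin n) (m : ℕ) : Prop :=
  ∀ j, (A.F (m - 2) j i ↔ A.F (m - 1) j i)

/-- The protocol `P0_opt` of Halpern, Moses and Waarts. -/
noncomputable def P0opt (n t : ℕ) : ProtoDec n := fun A i =>
  runDec fun m =>
    if Knows t (existsVal false) A i m then some false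
    else if Knows t (all1 n) A i m ∨ (2 ≤ m ∧ senderSetRepeats A i m) then some true
    else none

/-- The fact `∃correct(v)`: some correct (never-failing) process knows `∃v`. -/
def ExistsCorrectKnows {n : ℕ} (t : ℕ) (v : Bool) : Adversary n → ℕ → Prop :=
  fun A m => ∃ j, ¬ A.Faulty j ∧ Knows t (existsVal v) A j m

/-- The number `d` of failures process `i` knows of at time `m`: the number of
processes `j ≠ i` from which `i` receives no message in round `m`. -/
noncomputable def knownFaults {n : ℕ} (A : Adversary n) (i : Fin n) : ℕ → ℕ
  | 0 => 0
  | m + 1 => (Finset.univ.filter fun j => j ≠ i ∧ ¬ A.F m j i).card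

/-- The protocol `u-P₀` for uniform consensus: decide 0 as soon as
`K_i ∃correct(0)` holds, otherwise decide 1 at time `t+1`. -/
noncomputable def uP0 (n t : ℕ) : ProtoDec n := fun A i =>
  runDec fun m =>
    if Knows t (ExistsCorrectKnows t false) A i m then some false
    else if m = t + 1 then some true
    else none

/-- The unbeatable uniform consensus protocol `u-Opt₀`. -/
noncomputable def uOpt0 (n t : ℕ) : ProtoDec n := fun A i =>
  runDec fun m =>
    if Knows t (ExistsCorrectKnows t false) A i m then some false
    else if ¬ Knows t (existsVal false) A i m ∧ ∃ k ≤ m, RevealedTime A k i m then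
      some true
    else none

/-- All decisions in the run `P[A]` are taken at or before time `m`. -/
def AllDecidedBy {n : ℕ} (P : ProtoDec n) (A : Adversary n) (m : ℕ) : Prop :=
  ∀ i k, P A i k ≠ none → P A i m ≠ none

/-- `Q` last-decider dominates `P`. -/
def LDDominates {n : ℕ} (t : ℕ) (Q P : ProtoDec n) : Prop :=
  ∀ A : Adversary n, Valid t A → ∀ m, AllDecidedBy P A m → AllDecidedBy Q A m

/-- A 0-chain for `⟨i,m⟩`: distinct processes `j₀,…,j_d = i` with `d ≤ m`, `j₀` having
initial value 0, and `j_k` receiving a message from `j_{k-1}` at time `k` (round `k`). -/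
def ZeroChain {n : ℕ} (A : Adversary n) (i : Fin n) (m : ℕ) : Prop :=
  ∃ d ≤ m, ∃ js : ℕ → Fin n, js d = i ∧
    (∀ k ≤ d, ∀ l ≤ d, js k = js l → k = l) ∧
    A.init (js 0) = false ∧
    ∀ k, 1 ≤ k → k ≤ d → A.F (k - 1) (js (k - 1)) (js k)


section HiddenAux

variable {n : ℕ}

lemma seen_trans {A : Adversary n} {p q r : Fin n × ℕ} (h1 : Seen A p q) (h2 : Seen A q r) :
    Seen A p r := by
  induction h2 with
  | refl => exact h1
  | self _ ih => exact Seen.self ih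
  | step _ hf ih => exact Seen.step ih hf

lemma seen_snd_le {A : Adversary n} {p q : Fin n × ℕ} (h : Seen A p q) : p.2 ≤ q.2 := by
  induction h with
  | refl => exact le_rfl
  | self _ ih => exact ih.trans (Nat.le_succ _)
  | step _ _ ih => exact ih.trans (Nat.le_succ _)

lemma seen_self_chain {A : Adversary n} (i : Fin n) : ∀ {k m : ℕ}, k ≤ m → Seen A (i, k) (i, m) := by
  intro k m h
  induction m, h using Nat.le_induction with
  | base => exact Seen.refl _
  | succ m hm ih => exact Seen.self ih

lemma seen_congr {A B : Adversary n} (hF : ∀ l j x, A.F l j x → B.F l j x) :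
    ∀ {p q}, Seen A p q → Seen B p q := by
  intro p q h
  induction h with
  | refl => exact Seen.refl _
  | self _ ih => exact Seen.self ih
  | step _ hf ih => exact Seen.step ih (hF _ _ _ hf)

lemma seen_split {A : Adversary n} {p q : Fin n × ℕ} (h : Seen A p q) :
    ∀ k, p.2 ≤ k → k ≤ q.2 → ∃ c, Seen A p (c, k) ∧ Seen A (c, k) q := by
  induction h with
  | refl =>
      intro k h1 h2
      obtain rfl : k = p.2 := le_antisymm h2 h1
      exact ⟨p.1, Seen.refl p, Seen.refl p⟩
  | @self x l hpq ih =>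
      intro k h1 h2
      rcases Nat.lt_or_ge k (l+1) with h' | h'
      · obtain ⟨c, hc1, hc2⟩ := ih k h1 (Nat.lt_succ_iff.mp h')
        exact ⟨c, hc1, Seen.self hc2⟩
      · obtain rfl : k = l + 1 := le_antisymm h2 h'
        exact ⟨x, Seen.self hpq, Seen.refl _⟩
  | @step y x l hpq hf ih =>
      intro k h1 h2
      rcases Nat.lt_or_ge k (l+1) with h' | h'
      · obtain ⟨c, hc1, hc2⟩ := ih k h1 (Nat.lt_succ_iff.mp h')
        exact ⟨c, hc1, Seen.step hc2 hf⟩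
      · obtain rfl : k = l + 1 := le_antisymm h2 h'
        exact ⟨x, Seen.step hpq hf, Seen.refl _⟩

lemma crashed_stays {A : Adversary n} {c : Fin n} {k : ℕ} {q : Fin n × ℕ}
    (h : Seen A (c, k) q) (hc : A.crash c ≤ (k : ℕ∞)) : q.1 = c := by
  induction h with
  | refl => rfl
  | @self x l hpq ih => exact ih
  | @step y x l hpq hf ih =>
      subst ih
      have hkl : k ≤ l := seen_snd_le hpq
      have h1 : A.crash y ≤ ((l : ℕ) : ℕ∞) := hc.trans (by exact_mod_cast hkl)
      have : A.crash y < ((l + 1 : ℕ) : ℕ∞) :=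
        lt_of_le_of_lt h1 (by exact_mod_cast Nat.lt_succ_self l)
      exact absurd hf (A.after_crash l y x this)

lemma seen_of_seen_edges {A B : Adversary n} {i : Fin n} {m : ℕ}
    (h : ∀ (k : ℕ) (j x : Fin n), Seen A (x, k + 1) (i, m) → (A.F k j x ↔ B.F k j x)) :
    ∀ {p q}, Seen A p q → Seen A q (i, m) → Seen B p q := by
  intro p q hpq
  induction hpq with
  | refl => exact fun _ => Seen.refl _
  | @self x l hpq ih =>
      intro hq
      have hxl : Seen A (x, l) (i, m) := seen_trans (Seen.self (Seen.refl (x, l))) hq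
      exact Seen.self (ih hxl)
  | @step y x l hpq hf ih =>
      intro hq
      have hBF : B.F l y x := (h l y x hq).mp hf
      have hyl : Seen A (y, l) (i, m) := seen_trans (Seen.step (Seen.refl (y, l)) hf) hq
      exact Seen.step (ih hyl) hBF

lemma seen_of_seen_edges' {A B : Adversary n} {i : Fin n} {m : ℕ}
    (h : ∀ (k : ℕ) (j x : Fin n), Seen A (x, k + 1) (i, m) → (A.F k j x ↔ B.F k j x)) :
    ∀ {p q}, Seen B p q → Seen A q (i, m) → Seen A p q := by
  intro p q hpq
  induction hpq with
  | refl => exact fun _ => Seen.refl _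
  | @self x l hpq ih =>
      intro hq
      have hxl : Seen A (x, l) (i, m) := seen_trans (Seen.self (Seen.refl (x, l))) hq
      exact Seen.self (ih hxl)
  | @step y x l hpq hf ih =>
      intro hq
      have hAF : A.F l y x := (h l y x hq).mpr hf
      have hyl : Seen A (y, l) (i, m) := seen_trans (Seen.step (Seen.refl (y, l)) hAF) hq
      exact Seen.step (ih hyl) hAF

lemma sameView_of_edges {A B : Adversary n} {i : Fin n} {m : ℕ}
    (h : ∀ (k : ℕ) (j x : Fin n), Seen A (x, k + 1) (i, m) → (A.F k j x ↔ B.F k j x))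
    (hinit : ∀ j, Seen A (j, 0) (i, m) → A.init j = B.init j) :
    sameView A B i m := by
  refine ⟨fun p => ⟨fun hp => seen_of_seen_edges h hp (Seen.refl _),
      fun hp => seen_of_seen_edges' h hp (Seen.refl _)⟩, hinit, fun k j j' hs => h k j j' hs⟩

lemma revealedTime_transfer {A B : Adversary n} {i : Fin n} {m : ℕ}
    (hv : sameView A B i m) {k : ℕ} (h : RevealedTime A k i m) : RevealedTime B k i m := by
  intro j'
  rcases h j' with hs | ⟨i', k', rfl, hs, hnF⟩
  · exact Or.inl ((hv.1 _).mp hs)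
  · exact Or.inr ⟨i', k', rfl, (hv.1 _).mp hs, fun hBF => hnF ((hv.2.2 k' j' i' hs).mpr hBF)⟩

lemma seen_zero_of_revealed {C : Adversary n} {i j : Fin n} {m k : ℕ} (hk : k ≤ m)
    (hrev : RevealedTime C k i m) (hj : C.Active j m) {j' : Fin n}
    (hs : Seen C (j', 0) (j, m)) : Seen C (j', 0) (i, m) := by
  obtain ⟨c, h1, h2⟩ := seen_split hs k (Nat.zero_le k) hk
  rcases hrev c with hseen | ⟨i', k', hkk, hsi, hnF⟩
  · exact seen_trans h1 hseen
  · exfalso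
    have hcc : C.crash c ≤ (k : ℕ∞) := by
      subst hkk
      by_contra hlt
      push_neg at hlt
      exact hnF (C.before_crash k' c i' hlt)
    have hjc : j = c := crashed_stays h2 hcc
    subst hjc
    have : ((m : ℕ) : ℕ∞) < (k : ℕ∞) := lt_of_lt_of_le hj hcc
    have : m < k := by exact_mod_cast this
    omega

noncomputable def hideCrash (A : Adversary n) (m : ℕ) (js : ℕ → Fin n) (j : Fin n) : ℕ∞ :=
  if ∃ k ≤ m, js k = j ∧ A.crash j = (k : ℕ∞) then A.crash j + 1 else A.crash j

def hideF (A : Adversary n) (m : ℕ) (js : ℕ → Fin n) (l : ℕ) (j x : Fin n) : Prop :=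
  (((l + 1 : ℕ) : ℕ∞) < hideCrash A m js j) ∨
    (¬ (hideCrash A m js j < ((l + 1 : ℕ) : ℕ∞)) ∧
      (A.F l j x ∨ (l < m ∧ j = js l ∧ x = js (l + 1))))

lemma hideCrash_ge (A : Adversary n) (m : ℕ) (js : ℕ → Fin n) (j : Fin n) :
    A.crash j ≤ hideCrash A m js j := by
  unfold hideCrash
  split
  · exact le_self_add
  · exact le_rfl

noncomputable def hideAdv (A : Adversary n) (m : ℕ) (js : ℕ → Fin n) : Adversary n where
  init j := if j = js 0 then false else A.init j
  F := hideF A m js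
  crash := hideCrash A m js
  crash_pos j := le_trans (A.crash_pos j) (hideCrash_ge A m js j)
  before_crash l j x h := Or.inl h
  after_crash l j x h hF := by
    rcases hF with h1 | ⟨h2, _⟩
    · exact absurd h (not_lt.mpr h1.le)
    · exact h2 h

section Hide

variable {A : Adversary n} {i : Fin n} {m : ℕ} {js : ℕ → Fin n}
variable (hjs : ∀ k ≤ m, ¬ RevealedNode A (js k) k i m)

include hjs

lemma hide_unseen : ∀ k ≤ m, ¬ Seen A (js k, k) (i, m) :=
  fun k hk hs => hjs k hk (Or.inl hs)

lemma hide_b : ∀ (k' : ℕ) (x : Fin n), k' + 1 ≤ m → Seen A (x, k' + 1) (i, m) →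
    A.F k' (js (k' + 1)) x := by
  intro k' x hk hs
  by_contra hF
  exact hjs (k' + 1) hk (Or.inr ⟨x, k', rfl, hs, hF⟩)

lemma hide_crash_ge_idx : ∀ k ≤ m, (k : ℕ∞) ≤ A.crash (js k) := by
  intro k hk
  match k with
  | 0 => simp
  | (k' + 1) =>
    have hF := hide_b hjs k' i hk (seen_self_chain i hk)
    by_contra h
    push_neg at h
    exact A.after_crash k' (js (k' + 1)) i h hF

lemma hide_crash_lower : ∀ k ≤ m, ((k + 1 : ℕ) : ℕ∞) ≤ hideCrash A m js (js k) := by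
  intro k hk
  by_cases hP : ∃ k₀ ≤ m, js k₀ = js k ∧ A.crash (js k) = (k₀ : ℕ∞)
  · obtain ⟨k₀, hk₀, hjseq, hcr⟩ := hP
    have h1 : (k : ℕ∞) ≤ (k₀ : ℕ∞) := hcr ▸ hide_crash_ge_idx hjs k hk
    have h2 : k ≤ k₀ := by exact_mod_cast h1
    rw [hideCrash, if_pos ⟨k₀, hk₀, hjseq, hcr⟩, hcr]
    calc ((k + 1 : ℕ) : ℕ∞) ≤ ((k₀ + 1 : ℕ) : ℕ∞) := by exact_mod_cast Nat.succ_le_succ h2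
    _ = (k₀ : ℕ∞) + 1 := by push_cast; ring
  · rw [hideCrash, if_neg hP]
    have hge := hide_crash_ge_idx hjs k hk
    have hne : A.crash (js k) ≠ (k : ℕ∞) := fun h => hP ⟨k, hk, rfl, h⟩
    have hlt : (k : ℕ∞) < A.crash (js k) := lt_of_le_of_ne hge (Ne.symm hne)
    have h2 : (k : ℕ∞) + 1 ≤ A.crash (js k) := Order.add_one_le_of_lt hlt
    exact_mod_cast h2

lemma hide_js_ne_i : ∀ k ≤ m, js k ≠ i := by
  intro k hk heq
  exact hide_unseen hjs k hk (by rw [heq]; exact seen_self_chain i hk)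

lemma hide_edge_agree : ∀ (l : ℕ) (j x : Fin n), Seen A (x, l + 1) (i, m) →
    (A.F l j x ↔ hideF A m js l j x) := by
  intro l j x hs
  have hlm : l + 1 ≤ m := seen_snd_le hs
  have hx : x ≠ js (l + 1) := fun he => hide_unseen hjs (l + 1) hlm (he ▸ hs)
  have hpath : ¬ (l < m ∧ j = js l ∧ x = js (l + 1)) := fun h => hx h.2.2
  unfold hideF
  by_cases hP : ∃ k₀ ≤ m, js k₀ = j ∧ A.crash j = (k₀ : ℕ∞)
  · obtain ⟨k₀, hk₀m, hjsk, hcr⟩ := hP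
    have hBc : hideCrash A m js j = ((k₀ + 1 : ℕ) : ℕ∞) := by
      rw [hideCrash, if_pos ⟨k₀, hk₀m, hjsk, hcr⟩, hcr]
      push_cast; ring
    rw [hBc]
    rcases lt_trichotomy (l + 1) (k₀ + 1) with hlt | heq | hgt
    · have hBF : ((l + 1 : ℕ) : ℕ∞) < ((k₀ + 1 : ℕ) : ℕ∞) := by exact_mod_cast hlt
      have hAF : A.F l j x := by
        rcases Nat.lt_or_ge (l + 1) k₀ with h' | h'
        · exact A.before_crash l j x (by rw [hcr]; exact_mod_cast h')
        · have hk₀ : k₀ = l + 1 := le_antisymm h' (Nat.lt_succ_iff.mp hlt)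
          subst hk₀
          have := hide_b hjs l x hk₀m hs
          rwa [hjsk] at this
      exact ⟨fun _ => Or.inl hBF, fun _ => hAF⟩
    · obtain rfl : k₀ = l := Nat.succ_injective heq.symm
      constructor
      · intro hAF
        exact Or.inr ⟨lt_irrefl _, Or.inl hAF⟩
      · rintro (h' | ⟨-, hAF | hp⟩)
        · exact absurd h' (lt_irrefl _)
        · exact hAF
        · exact absurd hp hpath
    · have hcl : A.crash j < ((l + 1 : ℕ) : ℕ∞) := by
        rw [hcr]; exact_mod_cast Nat.lt_of_succ_lt hgt
      have hA' : ¬ A.F l j x := A.after_crash l j x hcl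
      have h1 : ¬ ((l + 1 : ℕ) : ℕ∞) < ((k₀ + 1 : ℕ) : ℕ∞) := by
        exact_mod_cast not_lt.mpr hgt.le
      have h2 : ((k₀ + 1 : ℕ) : ℕ∞) < ((l + 1 : ℕ) : ℕ∞) := by exact_mod_cast hgt
      constructor
      · intro hAF; exact absurd hAF hA'
      · rintro (h' | ⟨h', -⟩)
        · exact absurd h' h1
        · exact absurd h2 h'
  · have hBc : hideCrash A m js j = A.crash j := by rw [hideCrash, if_neg hP]
    rw [hBc]
    rcases lt_trichotomy (((l + 1 : ℕ) : ℕ∞)) (A.crash j) with hlt | heq | hgt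
    · exact ⟨fun _ => Or.inl hlt, fun _ => A.before_crash l j x hlt⟩
    · constructor
      · intro hAF; exact Or.inr ⟨fun h' => absurd (heq ▸ h') (lt_irrefl _), Or.inl hAF⟩
      · rintro (h' | ⟨-, hAF | hp⟩)
        · exact absurd (heq ▸ h') (lt_irrefl _)
        · exact hAF
        · exact absurd hp hpath
    · have hA' : ¬ A.F l j x := A.after_crash l j x hgt
      constructor
      · intro hAF; exact absurd hAF hA'
      · rintro (h' | ⟨h', -⟩)
        · exact absurd (h'.trans hgt) (lt_irrefl _)
        · exact absurd hgt h'

lemma hide_sameLocal (hact : A.Active i m) : sameLocal A (hideAdv A m js) i m := by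
  have hci : hideCrash A m js i = A.crash i := by
    rw [hideCrash, if_neg]
    rintro ⟨k₀, hk₀, hjsk, -⟩
    exact hide_js_ne_i hjs k₀ hk₀ hjsk
  refine ⟨hact, ?_, sameView_of_edges (hide_edge_agree hjs) ?_⟩
  · show ((m : ℕ) : ℕ∞) < hideCrash A m js i
    rw [hci]; exact hact
  · intro j hsj
    have hj0 : j ≠ js 0 := fun he => hide_unseen hjs 0 (Nat.zero_le m) (he ▸ hsj)
    show A.init j = if j = js 0 then false else A.init j
    rw [if_neg hj0]

omit hjs in
lemma hide_valid (hA : Valid t A) : Valid t (hideAdv A m js) := by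
  have hset : {j | (hideAdv A m js).Faulty j} = {j | A.Faulty j} := by
    ext j
    show hideCrash A m js j ≠ ⊤ ↔ A.crash j ≠ ⊤
    rw [hideCrash]
    split
    · rename_i h
      obtain ⟨k₀, -, -, hcr⟩ := h
      rw [hcr]
      have h1 : ((k₀ : ℕ∞) + 1) = ((k₀ + 1 : ℕ) : ℕ∞) := by push_cast; ring
      refine ⟨fun _ => ?_, fun _ => ?_⟩
      · exact ENat.coe_ne_top k₀
      · rw [h1]; exact ENat.coe_ne_top (k₀ + 1)
    · exact Iff.rfl
  show Adversary.numFaults _ ≤ t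
  rw [Adversary.numFaults, hset]
  exact hA

lemma hide_chain : ∀ k ≤ m, Seen (hideAdv A m js) (js 0, 0) (js k, k) := by
  intro k hk
  induction k with
  | zero => exact Seen.refl _
  | succ k ih =>
      have hk' : k ≤ m := Nat.le_of_succ_le hk
      refine Seen.step (ih hk') ?_
      refine Or.inr ⟨?_, Or.inr ⟨Nat.lt_of_succ_le hk, rfl, rfl⟩⟩
      exact not_lt.mpr (hide_crash_lower hjs k hk')

lemma hide_active_last : (hideAdv A m js).Active (js m) m := by
  show ((m : ℕ) : ℕ∞) < hideCrash A m js (js m)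
  refine lt_of_lt_of_le ?_ (hide_crash_lower hjs m le_rfl)
  exact_mod_cast Nat.lt_succ_self m

end Hide

end HiddenAux

/-- `K_i not-known(∃0)` holds at `⟨i,m⟩` iff `¬ K_i ∃0` and some time `k ≤ m` is
revealed to `⟨i,m⟩`. -/
theorem knows_not_known_iff_revealed (n t : ℕ) (ht : t < n)
    (A : Adversary n) (hA : Valid t A) (i : Fin n) (m : ℕ) (hact : A.Active i m) :
    Knows t (notKnown0 t) A i m ↔
      (¬ Knows t (existsVal false) A i m ∧ ∃ k ≤ m, RevealedTime A k i m) := by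
  constructor
  · intro hK
    have hself : sameLocal A A i m :=
      ⟨hact, hact, fun _ => Iff.rfl, fun _ _ => rfl, fun _ _ _ _ => Iff.rfl⟩
    refine ⟨(hK A hA hself) i hact, ?_⟩
    by_contra hno
    push_neg at hno
    have hjs' : ∀ k, ∃ j, k ≤ m → ¬ RevealedNode A j k i m := by
      intro k
      by_cases hk : k ≤ m
      · have h1 := hno k hk
        simp only [RevealedTime, not_forall] at h1
        obtain ⟨j, hj⟩ := h1
        exact ⟨j, fun _ => hj⟩
      · exact ⟨i, fun h => absurd h hk⟩
    choose js hjs using hjs'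
    have hjs : ∀ k ≤ m, ¬ RevealedNode A (js k) k i m := fun k hk => hjs k hk
    set B := hideAdv A m js with hB
    have hBval : Valid t B := hide_valid hA
    have hBloc : sameLocal A B i m := hide_sameLocal hjs hact
    have hnk0 : notKnown0 t B m := hK B hBval hBloc
    refine hnk0 (js m) (hide_active_last hjs) ?_
    intro C hC hCloc
    refine ⟨js 0, ?_⟩
    have hs : Seen C (js 0, 0) (js m, m) := (hCloc.2.2.1 _).mp (hide_chain hjs m le_rfl)
    have hinit : B.init (js 0) = C.init (js 0) := hCloc.2.2.2.1 (js 0) (hide_chain hjs m le_rfl)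
    rw [← hinit]
    show (if js 0 = js 0 then false else A.init (js 0)) = false
    rw [if_pos rfl]
  · rintro ⟨hnk, k, hk, hrev⟩ B hB hloc j hjact hknows
    simp only [Knows, not_forall] at hnk
    obtain ⟨B₀, hB₀val, hB₀loc, hB₀⟩ := hnk
    have hall : ∀ j', B₀.init j' = true := by
      intro j'
      by_contra h
      exact hB₀ ⟨j', Bool.eq_false_iff.mpr h⟩
    have hBrev : RevealedTime B k i m := revealedTime_transfer hloc.2.2 hrev
    have hseenInit : ∀ j', Seen B (j', 0) (j, m) → B.init j' = true := by
      intro j' hs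
      have hsi : Seen B (j', 0) (i, m) := seen_zero_of_revealed hk hBrev hjact hs
      have hsA : Seen A (j', 0) (i, m) := (hloc.2.2.1 _).mpr hsi
      have h1 : A.init j' = B.init j' := hloc.2.2.2.1 j' hsA
      have h2 : A.init j' = B₀.init j' := hB₀loc.2.2.2.1 j' hsA
      rw [← h1, h2]
      exact hall j'
    set B₁ : Adversary n := { B with init := fun _ => true } with hB₁
    have hval1 : Valid t B₁ := hB
    have hsl : sameLocal B B₁ j m := by
      refine ⟨hjact, hjact, fun p => ⟨seen_congr (A := B) (B := B₁) (fun _ _ _ h => h), seen_congr (A := B₁) (B := B) (fun _ _ _ h => h)⟩,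
        ?_, fun _ _ _ _ => Iff.rfl⟩
      intro j' hs
      exact hseenInit j' hs
    obtain ⟨j'', hj''⟩ := hknows B₁ hval1 hsl
    exact absurd hj'' (by simp [hB₁])
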